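/- Fix n and d. Let {Δ_k} be a sequence of n×n dissimilarity matrices converging in Frobenius norm to an n×n dissimilarity matrix Δ_∞, and for each k let D_k ∈ Min(Δ_k). Then the sequence {D_k} has an accumulation point: there is a subsequence of {D_k} that converges in Frobenius norm to some n×n EDM-1 matrix of embedding dimension at most d. -/

import Mathlib

open Filter Topology

/-- The Frobenius norm of an `n × n` real matrix. -/
noncomputable def frobNorm {n : ℕ} (A : Matrix (Fin n) (Fin n) ℝ) : ℝ :=
  Real.sqrt (∑ i, ∑ j, (A i j) ^ 2)

/-- An `n × n` dissimilarity matrix: symmetric, nonnegative, with zero diagonal. -/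
def IsDissim {n : ℕ} (Δ : Matrix (Fin n) (Fin n) ℝ) : Prop :=
  (∀ i j, Δ i j = Δ j i) ∧ (∀ i j, 0 ≤ Δ i j) ∧ (∀ i, Δ i i = 0)

/-- `D` is EDM-1 of embedding dimension at most `d`: entries are pairwise Euclidean
distances of `n` points in `ℝ^d`. -/
def IsEDM1 (d : ℕ) {n : ℕ} (D : Matrix (Fin n) (Fin n) ℝ) : Prop :=
  ∃ z : Fin n → EuclideanSpace ℝ (Fin d), ∀ i j, D i j = ‖z i - z j‖

/-- The set of global minimizers of `‖· - Δ‖_F` over the cone of `n × n` EDM-1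
matrices of embedding dimension at most `d`. -/
def MinSet (d : ℕ) {n : ℕ} (Δ : Matrix (Fin n) (Fin n) ℝ) :
    Set (Matrix (Fin n) (Fin n) ℝ) :=
  {D | IsEDM1 d D ∧ ∀ D', IsEDM1 d D' → frobNorm (D - Δ) ≤ frobNorm (D' - Δ)}

noncomputable def toE {n : ℕ} (A : Matrix (Fin n) (Fin n) ℝ) :
    EuclideanSpace ℝ (Fin n × Fin n) := WithLp.toLp 2 (fun p : Fin n × Fin n => A p.1 p.2)

lemma frobNorm_eq {n : ℕ} (A : Matrix (Fin n) (Fin n) ℝ) : frobNorm A = ‖toE A‖ := by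
  rw [EuclideanSpace.norm_eq, frobNorm, Fintype.sum_prod_type]
  congr 1
  refine Finset.sum_congr rfl fun i _ => Finset.sum_congr rfl fun j _ => ?_
  rw [Real.norm_eq_abs, sq_abs]; rfl

lemma toE_sub {n : ℕ} (A B : Matrix (Fin n) (Fin n) ℝ) : toE (A - B) = toE A - toE B := rfl

lemma toE_neg {n : ℕ} (A : Matrix (Fin n) (Fin n) ℝ) : toE (-A) = -toE A := rfl

lemma coord_le_norm {ι : Type*} [Fintype ι] (v : EuclideanSpace ℝ ι) (p : ι) :
    |v p| ≤ ‖v‖ := by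
  rw [EuclideanSpace.norm_eq, ← Real.sqrt_sq_eq_abs]
  apply Real.sqrt_le_sqrt
  have := Finset.single_le_sum (f := fun i => ‖v i‖ ^ 2)
    (fun i _ => sq_nonneg _) (Finset.mem_univ p)
  simpa [Real.norm_eq_abs, sq_abs] using this

lemma isEDM1_zero (d n : ℕ) : IsEDM1 d (0 : Matrix (Fin n) (Fin n) ℝ) :=
  ⟨fun _ => 0, fun i j => by simp [Matrix.zero_apply]⟩

/-- Theorem 3.1(a): any sequence of raw-stress minimizers of converging dissimilarity
matrices has an accumulation point in Frobenius norm. -/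
theorem minset_accumulation_point {n d : ℕ}
    (Δ : ℕ → Matrix (Fin n) (Fin n) ℝ) (Δinf : Matrix (Fin n) (Fin n) ℝ)
    (hΔ : ∀ k, IsDissim (Δ k)) (hΔinf : IsDissim Δinf)
    (hconv : Tendsto (fun k => frobNorm (Δ k - Δinf)) atTop (𝓝 0))
    (D : ℕ → Matrix (Fin n) (Fin n) ℝ) (hD : ∀ k, D k ∈ MinSet d (Δ k)) :
    ∃ φ : ℕ → ℕ, StrictMono φ ∧ ∃ Dinf : Matrix (Fin n) (Fin n) ℝ, IsEDM1 d Dinf ∧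
      Tendsto (fun k => frobNorm (D (φ k) - Dinf)) atTop (𝓝 0) := by
  set x : ℕ → EuclideanSpace ℝ (Fin n × Fin n) := fun k => toE (D k) with hxdef
  -- bound on frobNorm (Δ k - Δinf)
  obtain ⟨C0, hC0⟩ := hconv.bddAbove_range
  have hC0' : ∀ k, frobNorm (Δ k - Δinf) ≤ C0 := fun k => hC0 ⟨k, rfl⟩
  set C : ℝ := 2 * (C0 + frobNorm Δinf) with hCdef
  have hxC : ∀ k, ‖x k‖ ≤ C := by
    intro k
    have hmin := (hD k).2 0 (isEDM1_zero d n)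
    rw [zero_sub, frobNorm_eq, frobNorm_eq] at hmin
    have h1 : ‖toE (D k)‖ ≤ 2 * ‖toE (Δ k)‖ := by
      calc ‖toE (D k)‖ = ‖(toE (D k) - toE (Δ k)) + toE (Δ k)‖ := by
            rw [sub_add_cancel]
        _ ≤ ‖toE (D k) - toE (Δ k)‖ + ‖toE (Δ k)‖ := norm_add_le _ _
        _ ≤ ‖toE (Δ k)‖ + ‖toE (Δ k)‖ := by
            refine add_le_add_left ?_ _
            rw [← toE_sub]
            rw [toE_neg, norm_neg] at hmin
            exact hmin
        _ = 2 * ‖toE (Δ k)‖ := by ring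
    have h2 : ‖toE (Δ k)‖ ≤ C0 + frobNorm Δinf := by
      calc ‖toE (Δ k)‖ = ‖(toE (Δ k) - toE Δinf) + toE Δinf‖ := by
            rw [sub_add_cancel]
        _ ≤ ‖toE (Δ k) - toE Δinf‖ + ‖toE Δinf‖ := norm_add_le _ _
        _ ≤ C0 + frobNorm Δinf := by
            refine add_le_add ?_ (le_of_eq (frobNorm_eq _).symm)
            rw [← toE_sub, ← frobNorm_eq]; exact hC0' k
    calc ‖x k‖ ≤ 2 * ‖toE (Δ k)‖ := h1
      _ ≤ C := by rw [hCdef]; linarith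
  have hCnn : 0 ≤ C := le_trans (norm_nonneg (x 0)) (hxC 0)
  obtain ⟨y, -, φ, hφ, hx⟩ := tendsto_subseq_of_bounded
    (Metric.isBounded_closedBall (x := (0 : EuclideanSpace ℝ (Fin n × Fin n))) (r := C))
    (fun k => by simpa [Metric.mem_closedBall, dist_zero_right] using hxC k)
  set Dinf : Matrix (Fin n) (Fin n) ℝ := Matrix.of fun i j => y (i, j) with hDinfdef
  have hEDinf : toE Dinf = y := rfl
  have hDconv : Tendsto (fun k => frobNorm (D (φ k) - Dinf)) atTop (𝓝 0) := by
    simp only [frobNorm_eq, toE_sub, hEDinf]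
    exact (tendsto_iff_norm_sub_tendsto_zero.mp hx :)
  have hentry : ∀ p : Fin n × Fin n,
      Tendsto (fun k => D (φ k) p.1 p.2) atTop (𝓝 (y p)) := fun p =>
    ((EuclideanSpace.proj p).continuous.tendsto y).comp hx
  rcases Nat.eq_zero_or_pos n with hn | hn
  · subst hn
    exact ⟨φ, hφ, Dinf, ⟨fun _ => 0, fun i => i.elim0⟩, hDconv⟩
  · set i0 : Fin n := ⟨0, hn⟩
    choose z hz using fun k => (hD (φ k)).1
    set w : ℕ → (Fin n → EuclideanSpace ℝ (Fin d)) := fun k i => z k i - z k i0 with hwdef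
    have hwnorm : ∀ k, ‖w k‖ ≤ C := by
      intro k
      rw [pi_norm_le_iff_of_nonneg hCnn]
      intro i
      have : ‖w k i‖ = D (φ k) i i0 := (hz k i i0).symm
      rw [this]
      calc D (φ k) i i0 ≤ |x (φ k) (i, i0)| := le_abs_self _
        _ ≤ ‖x (φ k)‖ := coord_le_norm _ _
        _ ≤ C := hxC _
    obtain ⟨wlim, -, ψ, hψ, hw⟩ := tendsto_subseq_of_bounded
      (Metric.isBounded_closedBall (x := (0 : Fin n → EuclideanSpace ℝ (Fin d))) (r := C))
      (fun k => by simpa [Metric.mem_closedBall, dist_zero_right] using hwnorm k)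
    refine ⟨φ ∘ ψ, hφ.comp hψ, Dinf, ⟨wlim, fun i j => ?_⟩, hDconv.comp hψ.tendsto_atTop⟩
    have h1 : Tendsto (fun k => D (φ (ψ k)) i j) atTop (𝓝 (Dinf i j)) :=
      (hentry (i, j)).comp hψ.tendsto_atTop
    have h2 : Tendsto (fun k => D (φ (ψ k)) i j) atTop (𝓝 (‖wlim i - wlim j‖)) := by
      have hi : Tendsto (fun k => w (ψ k) i) atTop (𝓝 (wlim i)) :=
        ((continuous_apply i).tendsto wlim).comp hw
      have hj : Tendsto (fun k => w (ψ k) j) atTop (𝓝 (wlim j)) :=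
        ((continuous_apply j).tendsto wlim).comp hw
      have := (hi.sub hj).norm
      refine this.congr fun k => ?_
      rw [hwdef]
      simp only [sub_sub_sub_cancel_right]
      exact (hz (ψ k) i j).symm
    exact tendsto_nhds_unique h1 h2
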